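/- In the clocked λ-calculus, for the Böhm-sequence combinator Y_n = (η η) δ^{n-1} applied to a variable x (n ≥ 1), there is a finite clocked reduction Y_n x ↠c τ^{2n}( x ((η η) δ^{n-1} x) ). -/

import Mathlib

/-- clocked λ-terms: λ-terms with an extra unary constructor τ -/
inductive CLam : Type
  | var : Nat → CLam
  | app : CLam → CLam → CLam
  | lam : CLam → CLam
  | tau : CLam → CLam
deriving DecidableEq

namespace CLam

def lift (d : Nat) : CLam → CLam
  | var n => if n < d then var n else var (n+1)
  | app M N => app (lift d M) (lift d N)
  | lam M => lam (lift (d+1) M)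
  | tau M => tau (lift d M)

def subst (k : Nat) (N : CLam) : CLam → CLam
  | var n => if n = k then N else if k < n then var (n-1) else var n
  | app A B => app (subst k N A) (subst k N B)
  | lam A => lam (subst (k+1) (lift 0 N) A)
  | tau A => tau (subst k N A)

/-- one-step clocked reduction: compatible closure of
    (λ.M)N → τ(M[0:=N]) and (τ M)N → τ(M N) -/
inductive CStep : CLam → CLam → Prop
  | beta (M N : CLam) : CStep (app (lam M) N) (tau (subst 0 N M))
  | tauApp (M N : CLam) : CStep (app (tau M) N) (tau (app M N))
  | appL {M M'} (N) : CStep M M' → CStep (app M N) (app M' N)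
  | appR (M) {N N'} : CStep N N' → CStep (app M N) (app M N')
  | lam {M M'} : CStep M M' → CStep (lam M) (lam M')
  | tau {M M'} : CStep M M' → CStep (tau M) (tau M')

abbrev CStar : CLam → CLam → Prop := Relation.ReflTransGen CStep

/-- n-fold τ -/
def tauN : Nat → CLam → CLam
  | 0, M => M
  | n+1, M => tau (tauN n M)

end CLam

open CLam

def xv : CLam := CLam.var 0
def eta : CLam :=
  CLam.lam (CLam.lam (CLam.app (CLam.var 0)
    (CLam.app (CLam.app (CLam.var 1) (CLam.var 1)) (CLam.var 0))))
def delta : CLam := CLam.lam (CLam.lam (CLam.app (CLam.var 0) (CLam.app (CLam.var 1) (CLam.var 0))))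

/-- M δ^k : M applied to k copies of δ from the left -/
def appD : CLam → Nat → CLam
  | M, 0 => M
  | M, k+1 => CLam.app (appD M k) delta

namespace CLam

theorem subst_lift (M : CLam) : ∀ k N, subst k N (lift k M) = M := by
  induction M with
  | var n =>
      intro k N
      by_cases h : n < k
      · have h1 : n ≠ k := by omega
        have h2 : ¬ k < n := by omega
        simp [lift, subst, h, h1, h2]
      · have h1 : n + 1 ≠ k := by omega
        have h2 : k < n + 1 := by omega
        simp [lift, subst, h, h1, h2]
  | app A B ihA ihB => intro k N; simp [lift, subst, ihA, ihB]
  | lam A ih => intro k N; simp [lift, subst, ih]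
  | tau A ih => intro k N; simp [lift, subst, ih]

theorem star_appL {M M' : CLam} (N : CLam) (h : CStar M M') :
    CStar (app M N) (app M' N) :=
  Relation.ReflTransGen.lift (fun X => app X N) (fun _ _ s => CStep.appL N s) _ _ h

theorem star_tau {M M' : CLam} (h : CStar M M') : CStar (tau M) (tau M') :=
  Relation.ReflTransGen.lift tau (fun _ _ s => CStep.tau s) _ _ h

theorem star_tauN (j : Nat) {M M' : CLam} (h : CStar M M') :
    CStar (tauN j M) (tauN j M') := by
  induction j with
  | zero => exact h
  | succ j ih => exact star_tau ih

theorem tau_push (j : Nat) (M N : CLam) :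
    CStar (app (tauN j M) N) (tauN j (app M N)) := by
  induction j with
  | zero => exact Relation.ReflTransGen.refl
  | succ j ih =>
      exact (Relation.ReflTransGen.single (CStep.tauApp (tauN j M) N)).trans
        (star_tau ih)

theorem tauN_add (a b : Nat) (M : CLam) : tauN a (tauN b M) = tauN (a+b) M := by
  induction a with
  | zero => simp [tauN]
  | succ a ih => simp [tauN, ih, Nat.succ_add]

end CLam

theorem subst_eta (k : Nat) (N : CLam) : subst k N eta = eta := by
  simp [eta, subst]

/-- key step: for any A, M :  (δ A) M ↠ ττ(M (A M)) -/
theorem delta_red (A M : CLam) :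
    CStar (CLam.app (CLam.app delta A) M)
      (tauN 2 (CLam.app M (CLam.app A M))) := by
  have h1 : CStep (CLam.app delta A)
      (CLam.tau (CLam.lam (CLam.app (CLam.var 0)
        (CLam.app (lift 0 A) (CLam.var 0))))) := by
    have := CStep.beta (CLam.lam (CLam.app (CLam.var 0)
      (CLam.app (CLam.var 1) (CLam.var 0)))) A
    simpa [delta, subst] using this
  have h2 : CStep (CLam.app (CLam.lam (CLam.app (CLam.var 0)
        (CLam.app (lift 0 A) (CLam.var 0)))) M)
      (CLam.tau (CLam.app M (CLam.app A M))) := by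
    have := CStep.beta (CLam.app (CLam.var 0)
      (CLam.app (lift 0 A) (CLam.var 0))) M
    simpa [subst, CLam.subst_lift] using this
  exact ((Relation.ReflTransGen.single (CStep.appL M h1)).trans
    (Relation.ReflTransGen.single (CStep.tauApp _ M))).trans
    (CLam.star_tau (Relation.ReflTransGen.single h2))

/-- (η η) M ↠ ττ(M ((η η) M)) -/
theorem eta_red (M : CLam) :
    CStar (CLam.app (CLam.app eta eta) M)
      (tauN 2 (CLam.app M (CLam.app (CLam.app eta eta) M))) := by
  have h1 : CStep (CLam.app eta eta)
      (CLam.tau (CLam.lam (CLam.app (CLam.var 0)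
        (CLam.app (CLam.app eta eta) (CLam.var 0))))) := by
    have := CStep.beta (CLam.lam (CLam.app (CLam.var 0)
      (CLam.app (CLam.app (CLam.var 1) (CLam.var 1)) (CLam.var 0)))) eta
    simpa [eta, subst, lift] using this
  have h2 : CStep (CLam.app (CLam.lam (CLam.app (CLam.var 0)
        (CLam.app (CLam.app eta eta) (CLam.var 0)))) M)
      (CLam.tau (CLam.app M (CLam.app (CLam.app eta eta) M))) := by
    have := CStep.beta (CLam.app (CLam.var 0)
      (CLam.app (CLam.app eta eta) (CLam.var 0))) M
    simpa [subst, subst_eta] using this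
  exact ((Relation.ReflTransGen.single (CStep.appL M h1)).trans
    (Relation.ReflTransGen.single (CStep.tauApp _ M))).trans
    (CLam.star_tau (Relation.ReflTransGen.single h2))

theorem boehm_aux (k : Nat) :
    ∀ M : CLam, CStar (CLam.app (appD (CLam.app eta eta) k) M)
      (tauN (2*k+2) (CLam.app M (CLam.app (appD (CLam.app eta eta) k) M))) := by
  induction k with
  | zero => intro M; simpa [appD] using eta_red M
  | succ k ih =>
      intro M
      set A := appD (CLam.app eta eta) (k+1) with hA
      have hA' : A = CLam.app (appD (CLam.app eta eta) k) delta := rfl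
      have h1 : CStar A (tauN (2*k+2) (CLam.app delta A)) := by
        rw [hA']; exact ih delta
      have heq : tauN (2*k+2) (tauN 2 (CLam.app M (CLam.app A M)))
          = tauN (2*(k+1)+2) (CLam.app M (CLam.app A M)) := by
        rw [CLam.tauN_add]; ring_nf
      exact (((CLam.star_appL M h1).trans (CLam.tau_push _ _ _)).trans
        (CLam.star_tauN _ (delta_red A M))).trans (heq ▸ Relation.ReflTransGen.refl)

theorem boehm_clocked :
    ∀ n : Nat, 1 ≤ n →
      CStar (CLam.app (appD (CLam.app eta eta) (n-1)) xv)
        (tauN (2*n) (CLam.app xv (CLam.app (appD (CLam.app eta eta) (n-1)) xv))) := by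
  intro n hn
  obtain ⟨k, rfl⟩ := Nat.exists_eq_add_of_le hn
  have h := boehm_aux k xv
  have e1 : 1 + k - 1 = k := by omega
  have e2 : 2 * (1 + k) = 2 * k + 2 := by omega
  rw [e1, e2]
  exact h
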